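/- Let X be a beta prime random variable with parameters α, β > 0, having PDF f(x) = x^{α-1}(1+x)^{-α-β}/B(α,β) and CDF F on (0, ∞). For all x > α/β, 1 - F(x) ≤ x^α (1+x)^{1-α-β} / (B(α,β)(βx - α)). -/

import Mathlib

open MeasureTheory Set Filter


lemma realBeta (α β : ℝ) (hα : 0 < α) (hβ : 0 < β) :
    IntervalIntegrable (fun u : ℝ => u ^ (α - 1) * (1 - u) ^ (β - 1)) volume 0 1 ∧
    ∫ u in (0:ℝ)..1, u ^ (α - 1) * (1 - u) ^ (β - 1)
      = Real.Gamma α * Real.Gamma β / Real.Gamma (α + β) := by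
  set F : ℝ → ℂ := fun u : ℝ => (u : ℂ) ^ ((α : ℂ) - 1) * (1 - (u : ℂ)) ^ ((β : ℂ) - 1) with hF
  have hFi : IntervalIntegrable F volume 0 1 :=
    Complex.betaIntegral_convergent (by simpa using hα) (by simpa using hβ)
  have heq : ∀ u ∈ Icc (0:ℝ) 1, F u = ((u ^ (α - 1) * (1 - u) ^ (β - 1) : ℝ) : ℂ) := by
    intro u hu
    have h1 : (0:ℝ) ≤ u := hu.1
    have h2 : (0:ℝ) ≤ 1 - u := by linarith [hu.2]
    simp only [hF]
    rw [show ((α : ℂ) - 1) = ((α - 1 : ℝ) : ℂ) by push_cast; ring,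
      show ((β : ℂ) - 1) = ((β - 1 : ℝ) : ℂ) by push_cast; ring,
      ← Complex.ofReal_cpow h1, show (1 - (u:ℂ)) = ((1 - u : ℝ) : ℂ) by push_cast; ring,
      ← Complex.ofReal_cpow h2]
    push_cast; ring
  have hint : IntervalIntegrable (fun u : ℝ => u ^ (α - 1) * (1 - u) ^ (β - 1)) volume 0 1 := by
    rw [intervalIntegrable_iff_integrableOn_Ioc_of_le (by norm_num)]
    have := (hFi.1.congr_fun (fun u hu => heq u (Ioc_subset_Icc_self hu)) measurableSet_Ioc)
    have hre := this.re
    simpa [IntegrableOn] using hre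
  have hval : Complex.betaIntegral (α : ℂ) (β : ℂ)
      = ((∫ u in (0:ℝ)..1, u ^ (α - 1) * (1 - u) ^ (β - 1) : ℝ) : ℂ) := by
    rw [Complex.betaIntegral, ← intervalIntegral.integral_ofReal]
    exact intervalIntegral.integral_congr (fun u hu => heq u (by rwa [uIcc_of_le (by norm_num)] at hu))
  have hg := Complex.Gamma_mul_Gamma_eq_betaIntegral (s := (α:ℂ)) (t := (β:ℂ))
    (by simpa using hα) (by simpa using hβ)
  rw [hval, ← Complex.ofReal_add, Complex.Gamma_ofReal, Complex.Gamma_ofReal,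
    Complex.Gamma_ofReal, ← Complex.ofReal_mul, ← Complex.ofReal_mul] at hg
  have hg' : Real.Gamma α * Real.Gamma β
      = Real.Gamma (α + β) * ∫ u in (0:ℝ)..1, u ^ (α - 1) * (1 - u) ^ (β - 1) :=
    by exact_mod_cast hg
  have hΓ : 0 < Real.Gamma (α + β) := Real.Gamma_pos_of_pos (by linarith)
  exact ⟨hint, by rw [eq_div_iff hΓ.ne']; linarith [hg']⟩

lemma betaPrimeInt (α β : ℝ) (hα : 0 < α) (hβ : 0 < β) :
    IntegrableOn (fun t : ℝ => t ^ (α - 1) * (1 + t) ^ (-α - β)) (Ioi 0) volume ∧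
    ∫ t in Ioi (0:ℝ), t ^ (α - 1) * (1 + t) ^ (-α - β)
      = Real.Gamma α * Real.Gamma β / Real.Gamma (α + β) := by
  obtain ⟨hbi, hbv⟩ := realBeta α β hα hβ
  set φ : ℝ → ℝ := fun u => u / (1 - u) with hφ
  set φ' : ℝ → ℝ := fun u => ((1 - u) ^ 2)⁻¹ with hφ'
  have hderiv : ∀ u ∈ Ioo (0:ℝ) 1, HasDerivWithinAt φ (φ' u) (Ioo 0 1) u := by
    intro u hu
    have h1 : (1:ℝ) - u ≠ 0 := ne_of_gt (by linarith [hu.2])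
    have : HasDerivAt φ (φ' u) u := by
      have := (hasDerivAt_id u).div ((hasDerivAt_id u).const_sub 1) h1
      refine this.congr_deriv ?_
      symm
      simp only [hφ', id_eq]
      field_simp
      ring
    exact this.hasDerivWithinAt
  have hinj : InjOn φ (Ioo 0 1) := by
    intro u hu v hv h
    have h1 : (1:ℝ) - u ≠ 0 := ne_of_gt (by linarith [hu.2])
    have h2 : (1:ℝ) - v ≠ 0 := ne_of_gt (by linarith [hv.2])
    simp only [hφ] at h
    field_simp at h
    linarith
  have himg : φ '' Ioo 0 1 = Ioi (0:ℝ) := by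
    ext t
    constructor
    · rintro ⟨u, hu, rfl⟩
      exact div_pos hu.1 (by linarith [hu.2])
    · intro ht
      refine ⟨t / (1 + t), ⟨div_pos ht (by linarith [mem_Ioi.mp ht]), ?_⟩, ?_⟩
      · rw [div_lt_one (by linarith [mem_Ioi.mp ht])]; linarith [mem_Ioi.mp ht]
      · have ht' := mem_Ioi.mp ht
        have h1t : (1:ℝ) + t ≠ 0 := by positivity
        simp only [hφ]
        rw [show (1:ℝ) - t / (1 + t) = 1 / (1 + t) by field_simp; ring]
        field_simp
  have hEq : EqOn (fun u => |φ' u| • (fun t : ℝ => t ^ (α - 1) * (1 + t) ^ (-α - β)) (φ u))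
      (fun u : ℝ => u ^ (α - 1) * (1 - u) ^ (β - 1)) (Ioo 0 1) := by
    intro u hu
    have hu0 : (0:ℝ) < u := hu.1
    have h1u : (0:ℝ) < 1 - u := by linarith [hu.2]
    simp only [smul_eq_mul, hφ, hφ']
    have h1 : 1 + u / (1 - u) = (1 - u)⁻¹ := by field_simp; ring
    rw [h1, abs_of_pos (by positivity)]
    have e1 : (((1:ℝ)-u)^2)⁻¹ = (1-u)^(-2:ℝ) := by
      rw [← Real.rpow_natCast (1-u) 2, ← Real.rpow_neg h1u.le]; norm_num
    have e2 : (u/(1-u))^(α-1) = u^(α-1) * (1-u)^(-(α-1)) := by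
      rw [Real.div_rpow hu0.le h1u.le, Real.rpow_neg h1u.le, div_eq_mul_inv]
    have e3 : (((1:ℝ)-u)⁻¹)^(-α-β) = (1-u)^(α+β) := by
      rw [Real.inv_rpow h1u.le, ← Real.rpow_neg h1u.le]; ring_nf
    rw [e1, e2, e3]
    have e4 : ((1:ℝ)-u)^(-(α-1)) * (1-u)^(α+β) * (1-u)^(-2:ℝ) = (1-u)^(β-1) := by
      rw [← Real.rpow_add h1u, ← Real.rpow_add h1u]; ring_nf
    rw [← e4]; ring
  have hbi' : IntegrableOn (fun u : ℝ => u ^ (α - 1) * (1 - u) ^ (β - 1)) (Ioo 0 1) volume := by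
    have := (intervalIntegrable_iff_integrableOn_Ioc_of_le (by norm_num : (0:ℝ) ≤ 1)).mp hbi
    exact this.mono_set Ioo_subset_Ioc_self
  constructor
  · rw [← himg, integrableOn_image_iff_integrableOn_abs_deriv_smul measurableSet_Ioo hderiv hinj]
    exact hbi'.congr_fun (fun x hx => (hEq hx).symm) measurableSet_Ioo
  · rw [← himg, integral_image_eq_integral_abs_deriv_smul measurableSet_Ioo hderiv hinj,
      setIntegral_congr_fun measurableSet_Ioo hEq, ← hbv,
      intervalIntegral.integral_of_le (by norm_num : (0:ℝ) ≤ 1),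
      integral_Ioc_eq_integral_Ioo]


noncomputable def Gfun (α β : ℝ) (t : ℝ) : ℝ := t ^ α * (1 + t) ^ (1 - α - β) / (β * t - α)

noncomputable def Gder (α β : ℝ) (t : ℝ) : ℝ :=
  ((β * t - α) ^ 2)⁻¹ *
    (t ^ α * (1 + t) ^ (1 - α - β) * β -
      (α * t ^ (α - 1) * (1 + t) ^ (1 - α - β)
        + t ^ α * ((1 - α - β) * (1 + t) ^ (-α - β))) * (β * t - α))

lemma hasDerivNegG (α β : ℝ) {t : ℝ} (ht : 0 < t) (hd : 0 < β * t - α) :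
    HasDerivAt (fun s => -Gfun α β s) (Gder α β t) t := by
  have h1t : (0:ℝ) < 1 + t := by linarith
  have hN1 : HasDerivAt (fun s : ℝ => s ^ α) (α * t ^ (α - 1)) t :=
    Real.hasDerivAt_rpow_const (Or.inl ht.ne')
  have hN2 := HasDerivAt.rpow_const (p := 1 - α - β) ((hasDerivAt_id t).const_add 1)
    (Or.inl (by simp only [id_eq]; exact h1t.ne'))
  have hD : HasDerivAt (fun s : ℝ => β * s - α) β t := by
    simpa using ((hasDerivAt_id t).const_mul β).sub_const α
  have hG := (hN1.mul hN2).div hD hd.ne'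
  have hG' := hG.neg
  refine hG'.congr_deriv ?_
  symm
  unfold Gder
  simp only [id_eq, Pi.mul_apply]
  have he : 1 - α - β - 1 = -α - β := by ring
  rw [he]
  field_simp
  ring

lemma tailBound (α β : ℝ) (hα : 0 < α) (hβ : 0 < β) {x R : ℝ} (hx : α / β < x) (hR : x ≤ R) :
    ∫ t in x..R, t ^ (α - 1) * (1 + t) ^ (-α - β) ≤ Gfun α β x := by
  have hx0 : 0 < x := lt_trans (div_pos hα hβ) hx
  have hmem : ∀ t ∈ Icc x R, 0 < t ∧ 0 < β * t - α := by
    intro t ht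
    have hdx : α < β * x := by
      have := (div_lt_iff₀ hβ).mp hx; linarith
    have : β * x ≤ β * t := by nlinarith [ht.1]
    exact ⟨lt_of_lt_of_le hx0 ht.1, by linarith⟩
  -- pointwise bound
  have hpt : ∀ t ∈ Icc x R, t ^ (α - 1) * (1 + t) ^ (-α - β) ≤ Gder α β t := by
    intro t ht
    obtain ⟨ht0, htd⟩ := hmem t ht
    have h1t : (0:ℝ) < 1 + t := by linarith
    have hA : t ^ α = t ^ (α - 1) * t := by
      rw [← Real.rpow_add_one ht0.ne', sub_add_cancel]
    have hB : (1 + t) ^ (1 - α - β) = (1 + t) ^ (-α - β) * (1 + t) := by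
      rw [← Real.rpow_add_one h1t.ne']; congr 1; ring
    have hkey : Gder α β t - t ^ (α - 1) * (1 + t) ^ (-α - β)
        = ((β * t - α) ^ 2)⁻¹ * (t ^ (α - 1) * (1 + t) ^ (-α - β) * t * (α + β)) := by
      unfold Gder
      rw [hA, hB]
      field_simp
      ring
    have hpos : 0 ≤ ((β * t - α) ^ 2)⁻¹ * (t ^ (α - 1) * (1 + t) ^ (-α - β) * t * (α + β)) := by
      have h1 : 0 < t ^ (α - 1) := Real.rpow_pos_of_pos ht0 _
      have h2 : 0 < (1 + t) ^ (-α - β) := Real.rpow_pos_of_pos h1t _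
      positivity
    linarith [hkey ▸ hpos]
  -- continuity pieces
  have hcb : ContinuousOn (fun t : ℝ => 1 + t) (Icc x R) :=
    (continuous_const.add continuous_id').continuousOn
  have hne1 : ∀ t ∈ Icc x R, (t : ℝ) ≠ 0 ∨ (0:ℝ) ≤ α - 1 := fun t ht => Or.inl (hmem t ht).1.ne'
  have hc0 : ContinuousOn (fun t : ℝ => t ^ (α - 1)) (Icc x R) :=
    ContinuousOn.rpow_const continuous_id'.continuousOn hne1
  have hc1 : ContinuousOn (fun t : ℝ => t ^ α) (Icc x R) :=
    ContinuousOn.rpow_const continuous_id'.continuousOn (fun t ht => Or.inl (hmem t ht).1.ne')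
  have hne2 : ∀ t ∈ Icc x R, (1 + t : ℝ) ≠ 0 := fun t ht => by
    have := (hmem t ht).1; positivity
  have hc2 : ContinuousOn (fun t : ℝ => (1 + t) ^ (1 - α - β)) (Icc x R) :=
    ContinuousOn.rpow_const hcb (fun t ht => Or.inl (hne2 t ht))
  have hc3 : ContinuousOn (fun t : ℝ => (1 + t) ^ (-α - β)) (Icc x R) :=
    ContinuousOn.rpow_const hcb (fun t ht => Or.inl (hne2 t ht))
  have hc4 : ContinuousOn (fun t : ℝ => β * t - α) (Icc x R) :=
    ((continuous_const.mul continuous_id').sub continuous_const).continuousOn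
  have hcont : ContinuousOn (fun t : ℝ => t ^ (α - 1) * (1 + t) ^ (-α - β)) (Icc x R) :=
    hc0.mul hc3
  have hcontG : ContinuousOn (Gder α β) (Icc x R) := by
    unfold Gder
    exact (ContinuousOn.inv₀ (hc4.pow 2) (fun t ht => pow_ne_zero 2 (hmem t ht).2.ne')).mul
      (((hc1.mul hc2).mul continuousOn_const).sub
        ((((continuousOn_const.mul hc0).mul hc2).add
          (hc1.mul (continuousOn_const.mul hc3))).mul hc4))
  have hint1 : IntervalIntegrable (fun t : ℝ => t ^ (α - 1) * (1 + t) ^ (-α - β)) volume x R :=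
    (by rwa [uIcc_of_le hR] : ContinuousOn _ (uIcc x R)).intervalIntegrable
  have hint2 : IntervalIntegrable (Gder α β) volume x R :=
    (by rwa [uIcc_of_le hR] : ContinuousOn _ (uIcc x R)).intervalIntegrable
  have hftc := intervalIntegral.integral_eq_sub_of_hasDerivAt (f := fun s => -Gfun α β s)
    (f' := Gder α β)
    (fun t ht => hasDerivNegG α β (hmem t (by rwa [uIcc_of_le hR] at ht)).1
      (hmem t (by rwa [uIcc_of_le hR] at ht)).2) hint2
  have hGR : 0 ≤ Gfun α β R := by
    obtain ⟨hR0, hRd⟩ := hmem R ⟨hR, le_refl R⟩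
    have h1 : 0 ≤ R ^ α := (Real.rpow_pos_of_pos hR0 _).le
    have h2 : 0 ≤ (1 + R) ^ (1 - α - β) := (Real.rpow_pos_of_pos (by linarith) _).le
    unfold Gfun
    positivity
  calc ∫ t in x..R, t ^ (α - 1) * (1 + t) ^ (-α - β)
      ≤ ∫ t in x..R, Gder α β t := intervalIntegral.integral_mono_on hR hint1 hint2 hpt
    _ = Gfun α β x - Gfun α β R := by rw [hftc]; ring
    _ ≤ Gfun α β x := by linarith

/-- Beta prime tail upper bound `P₀`: for `α, β > 0` and `x > α/β`,
`1 - F(x) ≤ x^α (1+x)^{1-α-β} / (B(α,β)(βx - α))`, where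
`f(t) = t^{α-1}(1+t)^{-α-β}/B(α,β)` and `F(x) = ∫₀ˣ f`. -/
theorem stmt_18 (α β : ℝ) (hα : 0 < α) (hβ : 0 < β) :
    ∀ x : ℝ, α / β < x →
      1 - (∫ t in (0 : ℝ)..x,
            t ^ (α - 1) * (1 + t) ^ (-α - β) /
              (Real.Gamma α * Real.Gamma β / Real.Gamma (α + β)))
        ≤ x ^ α * (1 + x) ^ (1 - α - β) /
            ((Real.Gamma α * Real.Gamma β / Real.Gamma (α + β)) * (β * x - α)) := by
  intro x hx
  set B : ℝ := Real.Gamma α * Real.Gamma β / Real.Gamma (α + β) with hBdef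
  have hB : 0 < B := div_pos (mul_pos (Real.Gamma_pos_of_pos hα) (Real.Gamma_pos_of_pos hβ))
    (Real.Gamma_pos_of_pos (by linarith))
  obtain ⟨hIi, hIv⟩ := betaPrimeInt α β hα hβ
  have hx0 : 0 < x := lt_trans (div_pos hα hβ) hx
  rw [intervalIntegral.integral_div]
  have hRHS : x ^ α * (1 + x) ^ (1 - α - β) / (B * (β * x - α)) = Gfun α β x / B := by
    unfold Gfun; rw [div_div, mul_comm B (β * x - α)]
  rw [hRHS, sub_le_iff_le_add, ← add_div, le_div_iff₀ hB, one_mul]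
  have hint1 : IntervalIntegrable (fun t : ℝ => t ^ (α - 1) * (1 + t) ^ (-α - β)) volume 0 x := by
    rw [intervalIntegrable_iff_integrableOn_Ioc_of_le hx0.le]
    exact hIi.mono_set Ioc_subset_Ioi_self
  have htend : Tendsto (fun R : ℝ => ∫ t in (0:ℝ)..R, t ^ (α - 1) * (1 + t) ^ (-α - β))
      atTop (nhds B) := by
    have := intervalIntegral_tendsto_integral_Ioi 0 hIi tendsto_id
    rwa [hIv, ← hBdef] at this
  have hbound : ∀ᶠ R in atTop, (∫ t in (0:ℝ)..R, t ^ (α - 1) * (1 + t) ^ (-α - β))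
      ≤ Gfun α β x + ∫ t in (0:ℝ)..x, t ^ (α - 1) * (1 + t) ^ (-α - β) := by
    filter_upwards [eventually_ge_atTop x] with R hR
    have hint2 : IntervalIntegrable (fun t : ℝ => t ^ (α - 1) * (1 + t) ^ (-α - β)) volume x R := by
      rw [intervalIntegrable_iff_integrableOn_Ioc_of_le hR]
      exact hIi.mono_set (fun t ht => lt_trans hx0 ht.1)
    have hadd := intervalIntegral.integral_add_adjacent_intervals hint1 hint2
    have htail := tailBound α β hα hβ hx hR
    rw [← hadd]
    linarith
  have := le_of_tendsto htend hbound
  linarith
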